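/- Let ε(q) = 2·Σ_{i=1}^{3}(1 − cos qᵢ) and s = (2π)^{−3} ∫_{[−π,π]³} sin²(q₁) dq/ε(q). If λ ∈ ℝ satisfies λ·s = −1, then for every μ ∈ ℝ and every p ∈ ℝ³: (2π)^{−3} ∫_{[−π,π]³} (μ + λ·Σ_{i=1}^{3} cos(pᵢ − qᵢ))·sin(q₁)/ε(q) dq = −sin(p₁). -/

import Mathlib

open MeasureTheory Real

noncomputable section

/-- The cube `[-π,π]³` in `ℝ³`, a fundamental domain for the torus `𝕋³`. -/
def cube3 : Set (Fin 3 → ℝ) := Set.Icc (fun _ => -π) (fun _ => π)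

/-- The dispersion relation of the discrete Laplacian on `ℤ³`. -/
def εD (q : Fin 3 → ℝ) : ℝ := 2 * ∑ i, (1 - Real.cos (q i))

namespace OddThresholdAux


lemma continuous_εD : Continuous εD := by
  unfold εD; fun_prop

lemma εD_nonneg (q : Fin 3 → ℝ) : 0 ≤ εD q := by
  unfold εD
  have : ∀ i ∈ Finset.univ, (0:ℝ) ≤ 1 - Real.cos (q i) := fun i _ => by
    linarith [Real.cos_le_one (q i)]
  have := Finset.sum_nonneg this
  linarith

lemma one_sub_cos (t : ℝ) : 1 - Real.cos t = 2 * Real.sin (t/2)^2 := by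
  have h := Real.sin_sq_eq_half_sub (t/2)
  have h2 : 2 * (t/2) = t := by ring
  rw [h2] at h
  linarith

lemma one_sub_cos_ge {t : ℝ} (h : |t| ≤ π) : 2/π^2 * t^2 ≤ 1 - Real.cos t := by
  rw [one_sub_cos]
  have hπ := Real.pi_pos
  have hb : (0:ℝ) ≤ 2/π * (|t|/2) := by positivity
  have hs : 2/π * (|t|/2) ≤ Real.sin (|t|/2) :=
    Real.mul_le_sin (by positivity) (by linarith)
  have hsq : Real.sin (t/2)^2 = Real.sin (|t|/2)^2 := by
    rcases abs_cases t with ⟨h1,_⟩|⟨h1,_⟩ <;> rw [h1]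
    · rw [show (-t)/2 = -(t/2) by ring, Real.sin_neg]; ring
  have h2 : (2/π * (|t|/2))^2 ≤ Real.sin (|t|/2)^2 := by
    apply pow_le_pow_left₀ hb hs
  have h3 : (2/π * (|t|/2))^2 = t^2/π^2 := by
    rw [show 2/π * (|t|/2) = |t|/π by ring, div_pow, sq_abs]
  rw [hsq]
  rw [h3] at h2
  have : 2/π^2 * t^2 = 2 * (t^2/π^2) := by ring
  linarith



lemma cube3_abs_le {q : Fin 3 → ℝ} (hq : q ∈ cube3) (i : Fin 3) : |q i| ≤ π := by
  obtain ⟨h1, h2⟩ := hq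
  rw [abs_le]; exact ⟨h1 i, h2 i⟩

lemma εD_lower {q : Fin 3 → ℝ} (hq : q ∈ cube3) :
    4/π^2 * (∑ i, (q i)^2) ≤ εD q := by
  have hsum : ∑ i, (2/π^2 * (q i)^2) ≤ ∑ i, (1 - Real.cos (q i)) :=
    Finset.sum_le_sum fun i _ => one_sub_cos_ge (cube3_abs_le hq i)
  have h2 : ∑ i, (2/π^2 * (q i)^2) = 2/π^2 * ∑ i, (q i)^2 := by
    rw [Finset.mul_sum]
  rw [h2] at hsum
  unfold εD
  have h3 : 4/π^2 * (∑ i, (q i)^2) = 2 * (2/π^2 * ∑ i, (q i)^2) := by ring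
  rw [h3]
  linarith

lemma sin_div_eps_bound {q : Fin 3 → ℝ} (hq : q ∈ cube3) (hq0 : ∀ i, q i ≠ 0) :
    |Real.sin (q 0)| * (εD q)⁻¹ ≤ π^2/4 * ∏ i, |q i| ^ (-(1/3) : ℝ) := by
  have hπ := Real.pi_pos
  set S := ∑ i, (q i)^2 with hS
  have hSpos : 0 < S := by
    apply Finset.sum_pos' (fun i _ => sq_nonneg _)
    exact ⟨0, Finset.mem_univ 0,
      lt_of_le_of_ne (sq_nonneg _) (Ne.symm (pow_ne_zero 2 (hq0 0)))⟩
  have hε : 4/π^2 * S ≤ εD q := εD_lower hq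
  have hεpos : 0 < εD q := lt_of_lt_of_le (by positivity) hε
  set P := ∏ i, |q i| ^ ((1:ℝ)/3) with hP
  have hPpos : 0 < P := Finset.prod_pos fun i _ =>
    Real.rpow_pos_of_pos (abs_pos.mpr (hq0 i)) _
  -- |sin q₀| ≤ √S
  have h1 : |Real.sin (q 0)| ≤ Real.sqrt S := by
    have ha : |Real.sin (q 0)| ≤ |q 0| := Real.abs_sin_le_abs
    have hb : |q 0| ≤ Real.sqrt S := by
      rw [show |q 0| = Real.sqrt ((q 0)^2) by rw [Real.sqrt_sq_eq_abs]]
      apply Real.sqrt_le_sqrt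
      exact Finset.single_le_sum (f := fun i => (q i)^2) (fun i _ => sq_nonneg _) (Finset.mem_univ 0)
    linarith
  -- P ≤ √S
  have hP2 : P^2 ≤ S := by
    have hsq : P^2 = ∏ i, ((q i)^2) ^ ((1:ℝ)/3) := by
      rw [hP, ← Finset.prod_pow]
      apply Finset.prod_congr rfl
      intro i _
      rw [← Real.rpow_natCast (|q i| ^ ((1:ℝ)/3)) 2, ← Real.rpow_mul (abs_nonneg _),
        ← sq_abs, ← Real.rpow_natCast (|q i|) 2, ← Real.rpow_mul (abs_nonneg _)]
      norm_num
    rw [hsq]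
    have := Real.geom_mean_le_arith_mean3_weighted
      (w₁ := 1/3) (w₂ := 1/3) (w₃ := 1/3)
      (p₁ := (q 0)^2) (p₂ := (q 1)^2) (p₃ := (q 2)^2)
      (by norm_num) (by norm_num) (by norm_num)
      (sq_nonneg _) (sq_nonneg _) (sq_nonneg _) (by norm_num)
    rw [Fin.prod_univ_three]
    rw [hS, Fin.sum_univ_three]
    nlinarith [sq_nonneg (q 0), sq_nonneg (q 1), sq_nonneg (q 2)]
  have h2 : P ≤ Real.sqrt S := by
    rw [show P = Real.sqrt (P^2) by rw [Real.sqrt_sq hPpos.le]]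
    exact Real.sqrt_le_sqrt hP2
  have hkey : |Real.sin (q 0)| * P ≤ S := by
    calc |Real.sin (q 0)| * P ≤ Real.sqrt S * Real.sqrt S :=
          mul_le_mul h1 h2 hPpos.le (Real.sqrt_nonneg _)
    _ = S := Real.mul_self_sqrt hSpos.le
  -- chain
  have step1 : |Real.sin (q 0)| * (εD q)⁻¹ ≤ |Real.sin (q 0)| * (4/π^2 * S)⁻¹ := by
    apply mul_le_mul_of_nonneg_left _ (abs_nonneg _)
    exact inv_anti₀ (by positivity) hε
  have step2 : |Real.sin (q 0)| * (4/π^2 * S)⁻¹ = π^2/4 * (|Real.sin (q 0)| * S⁻¹) := by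
    field_simp
  have step3 : |Real.sin (q 0)| * S⁻¹ ≤ P⁻¹ := by
    rw [← div_eq_mul_inv, div_le_iff₀ hSpos, inv_mul_eq_div, le_div_iff₀ hPpos]
    exact hkey
  have step4 : P⁻¹ = ∏ i, |q i| ^ (-(1/3) : ℝ) := by
    rw [hP, ← Finset.prod_inv_distrib]
    apply Finset.prod_congr rfl
    intro i _
    rw [← Real.rpow_neg (abs_nonneg _)]
  calc |Real.sin (q 0)| * (εD q)⁻¹ ≤ π^2/4 * (|Real.sin (q 0)| * S⁻¹) := by
        rw [← step2]; exact step1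
  _ ≤ π^2/4 * P⁻¹ := by
        apply mul_le_mul_of_nonneg_left step3 (by positivity)
  _ = π^2/4 * ∏ i, |q i| ^ (-(1/3) : ℝ) := by rw [step4]



/-- The 1D dominating profile. -/
def F (t : ℝ) : ℝ := (Set.Icc (-π) π).indicator (fun t => |t| ^ (-(1/3) : ℝ)) t

lemma abs_rpow_third (t : ℝ) :
    |t| ^ (-(1/3) : ℝ) = (2/3) * (t ^ (-(1/3) : ℝ) + (-t) ^ (-(1/3) : ℝ)) := by
  have hcos : Real.cos (-(1/3) * π) = 1/2 := by
    rw [show (-(1/3) * π : ℝ) = -(π/3) by ring, Real.cos_neg, Real.cos_pi_div_three]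
  rcases lt_trichotomy t 0 with ht|rfl|ht
  · rw [abs_of_neg ht, Real.rpow_def_of_neg ht,
      Real.rpow_def_of_pos (by linarith : (0:ℝ) < -t), Real.log_neg_eq_log, hcos]
    ring
  · simp [Real.zero_rpow (show (-(1/3) : ℝ) ≠ 0 by norm_num)]
  · rw [abs_of_pos ht, Real.rpow_def_of_pos ht,
      Real.rpow_def_of_neg (by linarith : -t < 0), Real.log_neg_eq_log, hcos]
    ring

lemma F_integrable : Integrable F := by
  unfold F
  rw [integrable_indicator_iff measurableSet_Icc]
  have hππ : -π ≤ π := by linarith [Real.pi_pos]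
  rw [← intervalIntegrable_iff_integrableOn_Icc_of_le hππ]
  have h1 : IntervalIntegrable (fun t : ℝ => t ^ (-(1/3) : ℝ)) volume (-π) π :=
    intervalIntegral.intervalIntegrable_rpow' (by norm_num)
  have h2 : IntervalIntegrable (fun t : ℝ => (-t) ^ (-(1/3) : ℝ)) volume (-π) π := by
    have := (IntervalIntegrable.iff_comp_neg (by simp)).mp
      (intervalIntegral.intervalIntegrable_rpow' (a := π) (b := -π) (r := -(1/3)) (by norm_num))
    simpa using this
  have h3 := (h1.add h2).const_mul (2/3 : ℝ)
  have hfun : (fun t : ℝ => |t| ^ (-(1/3) : ℝ))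
      = fun t : ℝ => (2/3) * (t ^ (-(1/3) : ℝ) + (-t) ^ (-(1/3) : ℝ)) :=
    funext abs_rpow_third
  rw [hfun]
  exact h3

/-- The dominating function on the cube. -/
def G (q : Fin 3 → ℝ) : ℝ := ∏ i, F (q i)

lemma G_integrable : Integrable G := Integrable.fintype_prod fun _ => F_integrable

lemma ae_ne_zero : ∀ᵐ q ∂(volume.restrict cube3), ∀ i : Fin 3, q i ≠ 0 := by
  rw [ae_all_iff]
  intro i
  have h : ∀ᵐ q : Fin 3 → ℝ ∂volume, q i ≠ 0 := by
    rw [show (volume : Measure (Fin 3 → ℝ)) = Measure.pi fun _ => volume from rfl]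
    exact Measure.ae_eval_ne _ i 0
  exact h.filter_mono (ae_mono Measure.restrict_le_self)

lemma integrableOn_of_bound (h : (Fin 3 → ℝ) → ℝ)
    (hm : AEStronglyMeasurable h (volume.restrict cube3)) (C : ℝ)
    (hC : ∀ q ∈ cube3, (∀ i, q i ≠ 0) → |h q| ≤ C * (|Real.sin (q 0)| * (εD q)⁻¹)) :
    IntegrableOn h cube3 := by
  have hG' : Integrable (fun q => (max C 0 * (π^2/4)) * G q) (volume.restrict cube3) :=
    (G_integrable.restrict.const_mul _)
  apply Integrable.mono' hG' hm
  have hmem : ∀ᵐ q ∂(volume.restrict cube3), q ∈ cube3 :=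
    ae_restrict_mem measurableSet_Icc
  filter_upwards [ae_ne_zero, hmem] with q h0 hqc
  have hb := sin_div_eps_bound hqc h0
  have hnn : (0:ℝ) ≤ |Real.sin (q 0)| * (εD q)⁻¹ := by
    have := εD_nonneg q
    positivity
  have hGq : G q = ∏ i, |q i| ^ (-(1/3) : ℝ) := by
    unfold G F
    apply Finset.prod_congr rfl
    intro i _
    rw [Set.indicator_of_mem]
    rw [Set.mem_Icc, ← abs_le]
    obtain ⟨h1, h2⟩ := hqc
    rw [abs_le]; exact ⟨h1 i, h2 i⟩
  calc ‖h q‖ = |h q| := rfl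
  _ ≤ C * (|Real.sin (q 0)| * (εD q)⁻¹) := hC q hqc h0
  _ ≤ max C 0 * (|Real.sin (q 0)| * (εD q)⁻¹) :=
      mul_le_mul_of_nonneg_right (le_max_left _ _) hnn
  _ ≤ max C 0 * (π^2/4 * ∏ i, |q i| ^ (-(1/3) : ℝ)) :=
      mul_le_mul_of_nonneg_left hb (le_max_right _ _)
  _ = max C 0 * (π^2/4) * G q := by rw [hGq]; ring



/-- Coordinate reflection. -/
def flip3 (b : Fin 3 → Bool) (q : Fin 3 → ℝ) : Fin 3 → ℝ :=
  fun i => if b i then -q i else q i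

lemma flip3_invol (b : Fin 3 → Bool) : Function.Involutive (flip3 b) := by
  intro q; funext i; unfold flip3; by_cases h : b i <;> simp [h]

lemma continuous_flip3 (b : Fin 3 → Bool) : Continuous (flip3 b) := by
  apply continuous_pi
  intro i
  by_cases h : b i <;> simp only [flip3, h, if_true, if_false]
  · exact (continuous_apply i).neg
  · exact continuous_apply i

lemma measurePreserving_flip3 (b : Fin 3 → Bool) :
    MeasurePreserving (flip3 b) volume volume := by
  have : flip3 b = fun (q : Fin 3 → ℝ) i => (fun t : ℝ => if b i then -t else t) (q i) := rfl
  rw [this]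
  exact volume_preserving_pi (f := fun i (t : ℝ) => if b i then -t else t)
    (fun i => by
      by_cases h : b i <;> simp only [h, if_true, if_false]
      · exact Measure.measurePreserving_neg _
      · exact MeasurePreserving.id _)

lemma measurableEmbedding_flip3 (b : Fin 3 → Bool) : MeasurableEmbedding (flip3 b) := by
  have hc := continuous_flip3 b
  exact (Homeomorph.mk ((flip3_invol b).toPerm _) hc hc).measurableEmbedding

lemma flip3_preimage (b : Fin 3 → Bool) : flip3 b ⁻¹' cube3 = cube3 := by
  ext q
  simp only [cube3, Set.mem_preimage, Set.mem_Icc, Pi.le_def, flip3]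
  constructor <;>
    (rintro ⟨h1, h2⟩
     refine ⟨fun i => ?_, fun i => ?_⟩ <;>
       (have a := h1 i; have c := h2 i; by_cases h : b i <;> simp [h] at a c ⊢ <;> linarith))

lemma integral_flip3 (b : Fin 3 → Bool) (h : (Fin 3 → ℝ) → ℝ) :
    ∫ q in cube3, h (flip3 b q) = ∫ q in cube3, h q := by
  have key := (measurePreserving_flip3 b).setIntegral_preimage_emb
    (measurableEmbedding_flip3 b) h cube3
  rwa [flip3_preimage] at key

lemma εD_flip3 (b : Fin 3 → Bool) (q : Fin 3 → ℝ) : εD (flip3 b q) = εD q := by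
  unfold εD flip3
  congr 1
  apply Finset.sum_congr rfl
  intro i _
  by_cases h : b i <;> simp [h, Real.cos_neg]


end OddThresholdAux

open OddThresholdAux

/-- if `λ·s = -1`, then the odd function `sin p₁` is an
eigenfunction of the threshold Birman–Schwinger operator with eigenvalue `-1`,
for every `μ`. -/
theorem odd_threshold_eigenfunction
    (s : ℝ)
    (hs : s = ((2 * π) ^ 3)⁻¹ * ∫ q in cube3, (Real.sin (q 0)) ^ 2 * (εD q)⁻¹)
    (lam : ℝ) (hlam : lam * s = -1) :
    ∀ (μ : ℝ) (p : Fin 3 → ℝ),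
      ((2 * π) ^ 3)⁻¹ *
        ∫ q in cube3, (μ + lam * ∑ i, Real.cos (p i - q i)) * Real.sin (q 0) / εD q
          = -Real.sin (p 0) := by
  intro μ p
  have hπ := Real.pi_pos
  have hεm : Measurable εD := continuous_εD.measurable
  set f : (Fin 3 → ℝ) → ℝ :=
    fun q => (μ + lam * ∑ i, Real.cos (p i - q i)) * Real.sin (q 0) / εD q with hfdef
  set f' : (Fin 3 → ℝ) → ℝ :=
    fun q => (μ + lam * ∑ i, Real.cos (p i + q i)) * (-Real.sin (q 0)) / εD q with hf'def
  set g0 : (Fin 3 → ℝ) → ℝ :=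
    fun q => (lam * Real.sin (p 0)) * (Real.sin (q 0) * (Real.sin (q 0) * (εD q)⁻¹)) with hg0def
  set g1 : (Fin 3 → ℝ) → ℝ :=
    fun q => (lam * Real.sin (p 1)) * (Real.sin (q 1) * (Real.sin (q 0) * (εD q)⁻¹)) with hg1def
  set g2 : (Fin 3 → ℝ) → ℝ :=
    fun q => (lam * Real.sin (p 2)) * (Real.sin (q 2) * (Real.sin (q 0) * (εD q)⁻¹)) with hg2def
  -- measurability
  have hm_sum : Measurable fun q : Fin 3 → ℝ => μ + lam * ∑ i, Real.cos (p i - q i) :=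
    measurable_const.add (measurable_const.mul
      (Finset.measurable_sum Finset.univ fun i _ =>
        (measurable_const.sub (measurable_pi_apply i)).cos))
  have hm_sum' : Measurable fun q : Fin 3 → ℝ => μ + lam * ∑ i, Real.cos (p i + q i) :=
    measurable_const.add (measurable_const.mul
      (Finset.measurable_sum Finset.univ fun i _ =>
        (measurable_const.add (measurable_pi_apply i)).cos))
  have hm_f : Measurable f := (hm_sum.mul (measurable_pi_apply 0).sin).div hεm
  have hm_f' : Measurable f' := (hm_sum'.mul (measurable_pi_apply 0).sin.neg).div hεm
  have hm_g : ∀ i : Fin 3, Measurable fun q : Fin 3 → ℝ =>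
      (lam * Real.sin (p i)) * (Real.sin (q i) * (Real.sin (q 0) * (εD q)⁻¹)) := fun i =>
    measurable_const.mul ((measurable_pi_apply i).sin.mul
      ((measurable_pi_apply 0).sin.mul hεm.inv))
  -- bound for f and f'
  have hA : ∀ q : Fin 3 → ℝ, |μ + lam * ∑ i, Real.cos (p i - q i)| ≤ |μ| + 3 * |lam| := by
    intro q
    have h1 : |∑ i, Real.cos (p i - q i)| ≤ ∑ i, |Real.cos (p i - q i)| :=
      Finset.abs_sum_le_sum_abs _ _
    have h2 : ∑ i, |Real.cos (p i - q i)| ≤ 3 := by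
      rw [Fin.sum_univ_three]
      have := Real.abs_cos_le_one (p 0 - q 0)
      have := Real.abs_cos_le_one (p 1 - q 1)
      have := Real.abs_cos_le_one (p 2 - q 2)
      linarith
    calc |μ + lam * ∑ i, Real.cos (p i - q i)|
        ≤ |μ| + |lam| * |∑ i, Real.cos (p i - q i)| := by
          rw [← abs_mul]; exact abs_add_le _ _
    _ ≤ |μ| + 3 * |lam| := by nlinarith [abs_nonneg lam]
  have hA' : ∀ q : Fin 3 → ℝ, |μ + lam * ∑ i, Real.cos (p i + q i)| ≤ |μ| + 3 * |lam| := by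
    intro q
    have h1 : |∑ i, Real.cos (p i + q i)| ≤ ∑ i, |Real.cos (p i + q i)| :=
      Finset.abs_sum_le_sum_abs _ _
    have h2 : ∑ i, |Real.cos (p i + q i)| ≤ 3 := by
      rw [Fin.sum_univ_three]
      have := Real.abs_cos_le_one (p 0 + q 0)
      have := Real.abs_cos_le_one (p 1 + q 1)
      have := Real.abs_cos_le_one (p 2 + q 2)
      linarith
    calc |μ + lam * ∑ i, Real.cos (p i + q i)|
        ≤ |μ| + |lam| * |∑ i, Real.cos (p i + q i)| := by
          rw [← abs_mul]; exact abs_add_le _ _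
    _ ≤ |μ| + 3 * |lam| := by nlinarith [abs_nonneg lam]
  have hInt_f : IntegrableOn f cube3 := by
    apply integrableOn_of_bound f hm_f.aestronglyMeasurable.restrict (|μ| + 3 * |lam|)
    intro q _ _
    have he : |f q| = |μ + lam * ∑ i, Real.cos (p i - q i)| * (|Real.sin (q 0)| * (εD q)⁻¹) := by
      rw [hfdef]
      simp only [abs_div, abs_mul, abs_of_nonneg (εD_nonneg q)]
      rw [div_eq_mul_inv]; ring
    rw [he]
    apply mul_le_mul_of_nonneg_right (hA q)
    have := εD_nonneg q
    positivity
  have hInt_f' : IntegrableOn f' cube3 := by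
    apply integrableOn_of_bound f' hm_f'.aestronglyMeasurable.restrict (|μ| + 3 * |lam|)
    intro q _ _
    have he : |f' q| = |μ + lam * ∑ i, Real.cos (p i + q i)| * (|Real.sin (q 0)| * (εD q)⁻¹) := by
      rw [hf'def]
      simp only [abs_div, abs_mul, abs_neg, abs_of_nonneg (εD_nonneg q)]
      rw [div_eq_mul_inv]; ring
    rw [he]
    apply mul_le_mul_of_nonneg_right (hA' q)
    have := εD_nonneg q
    positivity
  have hInt_g : ∀ i : Fin 3, IntegrableOn (fun q : Fin 3 → ℝ =>
      (lam * Real.sin (p i)) * (Real.sin (q i) * (Real.sin (q 0) * (εD q)⁻¹))) cube3 := by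
    intro i
    apply integrableOn_of_bound _ (hm_g i).aestronglyMeasurable.restrict |lam|
    intro q _ _
    have hnn : (0:ℝ) ≤ (εD q)⁻¹ := inv_nonneg.mpr (εD_nonneg q)
    have he : |(lam * Real.sin (p i)) * (Real.sin (q i) * (Real.sin (q 0) * (εD q)⁻¹))|
        = (|lam| * |Real.sin (p i)| * |Real.sin (q i)|) * (|Real.sin (q 0)| * (εD q)⁻¹) := by
      simp only [abs_mul, abs_of_nonneg hnn]; ring
    rw [he]
    apply mul_le_mul_of_nonneg_right
    · calc |lam| * |Real.sin (p i)| * |Real.sin (q i)|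
          ≤ |lam| * |Real.sin (p i)| :=
            mul_le_of_le_one_right (by positivity) (Real.abs_sin_le_one _)
      _ ≤ |lam| := mul_le_of_le_one_right (abs_nonneg _) (Real.abs_sin_le_one _)
    · positivity
  have hInt_g0 : IntegrableOn g0 cube3 := hInt_g 0
  have hInt_g1 : IntegrableOn g1 cube3 := hInt_g 1
  have hInt_g2 : IntegrableOn g2 cube3 := hInt_g 2
  -- reflection: ∫ f' = ∫ f
  have hcomp : ∀ q, f (flip3 (fun _ => true) q) = f' q := by
    intro q
    have hε : εD (flip3 (fun _ => true) q) = εD q := εD_flip3 _ q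
    rw [hfdef, hf'def]
    simp only [flip3, if_true, hε]
    simp only [Fin.sum_univ_three, Real.sin_neg, sub_neg_eq_add]
  have h_flip : ∫ q in cube3, f' q = ∫ q in cube3, f q := by
    have h1 : (fun q => f' q) = fun q => f (flip3 (fun _ => true) q) :=
      funext fun q => (hcomp q).symm
    rw [h1, integral_flip3]
  -- pointwise identity
  have hptw : ∀ q, f' q + f q = 2 * (g0 q + g1 q + g2 q) := by
    intro q
    rw [hfdef, hf'def, hg0def, hg1def, hg2def]
    simp only []
    rw [← add_div, div_eq_mul_inv]
    simp only [Fin.sum_univ_three, Real.cos_sub, Real.cos_add]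
    ring
  -- odd terms vanish
  have hzero : ∀ (j : Fin 3) (b : Fin 3 → Bool), b 0 = false → b j = true →
      (∀ q, (fun q : Fin 3 → ℝ =>
        (lam * Real.sin (p j)) * (Real.sin (q j) * (Real.sin (q 0) * (εD q)⁻¹))) (flip3 b q)
        = -((lam * Real.sin (p j)) * (Real.sin (q j) * (Real.sin (q 0) * (εD q)⁻¹)))) := by
    intro j b hb0 hbj q
    have hε : εD (flip3 b q) = εD q := εD_flip3 b q
    simp only [flip3, hb0, hbj, if_true, if_false, Bool.false_eq_true, hε, Real.sin_neg]
    ring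
  have hI1 : ∫ q in cube3, g1 q = 0 := by
    have h := integral_flip3 ![false, true, false] g1
    have h2 : (fun q => g1 (flip3 ![false, true, false] q)) = fun q => -g1 q :=
      funext (hzero 1 ![false, true, false] rfl rfl)
    rw [h2, integral_neg] at h
    linarith
  have hI2 : ∫ q in cube3, g2 q = 0 := by
    have h := integral_flip3 ![false, false, true] g2
    have h2 : (fun q => g2 (flip3 ![false, false, true] q)) = fun q => -g2 q :=
      funext (hzero 2 ![false, false, true] rfl rfl)
    rw [h2, integral_neg] at h
    linarith
  -- the surviving term
  have hπ3 : ((2 * π) ^ 3 : ℝ) ≠ 0 := by positivity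
  have hJ : ∫ q in cube3, (Real.sin (q 0)) ^ 2 * (εD q)⁻¹ = (2 * π) ^ 3 * s := by
    rw [hs]
    field_simp
  have hI0 : ∫ q in cube3, g0 q = (lam * Real.sin (p 0)) * ((2 * π) ^ 3 * s) := by
    rw [hg0def]
    rw [MeasureTheory.integral_const_mul]
    have h2 : (fun q : Fin 3 → ℝ => Real.sin (q 0) * (Real.sin (q 0) * (εD q)⁻¹))
        = fun q : Fin 3 → ℝ => (Real.sin (q 0)) ^ 2 * (εD q)⁻¹ :=
      funext fun q => by ring
    rw [h2, hJ]
  -- assemble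
  have hsum : ∫ q in cube3, (f' q + f q)
      = (∫ q in cube3, f' q) + ∫ q in cube3, f q := integral_add hInt_f' hInt_f
  have hsum2 : ∫ q in cube3, (f' q + f q)
      = ∫ q in cube3, 2 * (g0 q + g1 q + g2 q) := by
    have : (fun q => f' q + f q) = fun q => 2 * (g0 q + g1 q + g2 q) := funext hptw
    rw [this]
  have hsum3 : ∫ q in cube3, 2 * (g0 q + g1 q + g2 q)
      = 2 * ((∫ q in cube3, g0 q) + (∫ q in cube3, g1 q) + ∫ q in cube3, g2 q) := by
    have hadd1 : Integrable (fun q => g0 q + g1 q) (volume.restrict cube3) :=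
      hInt_g0.add hInt_g1
    rw [MeasureTheory.integral_const_mul]
    rw [integral_add hadd1 hInt_g2, integral_add hInt_g0 hInt_g1]
  have hIf : ∫ q in cube3, f q = (lam * Real.sin (p 0)) * ((2 * π) ^ 3 * s) := by
    have : 2 * ∫ q in cube3, f q
        = 2 * ((lam * Real.sin (p 0)) * ((2 * π) ^ 3 * s)) := by
      rw [← hI0]
      calc 2 * ∫ q in cube3, f q
          = (∫ q in cube3, f' q) + ∫ q in cube3, f q := by rw [h_flip]; ring
      _ = 2 * ((∫ q in cube3, g0 q) + (∫ q in cube3, g1 q) + ∫ q in cube3, g2 q) := by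
            rw [← hsum, hsum2, hsum3]
      _ = 2 * ∫ q in cube3, g0 q := by rw [hI1, hI2]; ring
    linarith
  rw [hIf]
  calc ((2 * π) ^ 3)⁻¹ * ((lam * Real.sin (p 0)) * ((2 * π) ^ 3 * s))
      = (lam * s) * Real.sin (p 0) := by field_simp
  _ = -Real.sin (p 0) := by rw [hlam]; ring
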